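/- Let n ≥ 1, let Q be an n×n real symmetric matrix with eigenvalues λ_1,…,λ_n (listed with multiplicity), let m ≥ 1, and let a_1,…,a_m ∈ ℝ. Let A be the mn×mn block matrix with block rows (0, I_n, 0, …, 0), (0, 0, I_n, …, 0), …, (0, …, 0, I_n), (−a_1 Q, −a_2 Q, …, −a_m Q). Then the characteristic polynomial of A factors as det(x·I_{mn} − A) = ∏_{l=1}^{n} ( x^m + a_m λ_l x^{m−1} + a_{m−1} λ_l x^{m−2} + ⋯ + a_2 λ_l x + a_1 λ_l ). -/

import Mathlib

open Polynomial

/-- The `mn × mn` block matrix of the `m`-th order consensus system: block row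
`j` (for `j = 1, …, m−1`) is zero except for `I_n` in block column `j+1`, and
the last block row is `(-a₁Q, -a₂Q, …, -a_mQ)` (here `a : Fin m → ℝ` with
`a j` the gain `a_{j+1}`). -/
def blockA (m n : ℕ) (a : Fin m → ℝ) (Q : Matrix (Fin n) (Fin n) ℝ) :
    Matrix (Fin m × Fin n) (Fin m × Fin n) ℝ :=
  Matrix.of fun x y =>
    if (x.1 : ℕ) + 1 = m then -(a y.1) * Q x.2 y.2
    else if (y.1 : ℕ) = (x.1 : ℕ) + 1 ∧ x.2 = y.2 then 1 else 0

namespace BlockAProof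

open Matrix Kronecker

variable {R : Type*} [CommRing R]

/-- The transposed companion matrix of `X^m + c_{m-1} X^{m-1} + ⋯ + c_0`. -/
def cmat (m : ℕ) (c : Fin m → R) : Matrix (Fin m) (Fin m) R :=
  Matrix.of fun i j => if (i : ℕ) + 1 = m then -c j else if (j : ℕ) = (i : ℕ) + 1 then 1 else 0

theorem cmat_charpoly (m : ℕ) (c : Fin m → R) :
    (cmat m c).charpoly = X ^ m + ∑ j : Fin m, C (c j) * X ^ (j : ℕ) := by
  induction m with
  | zero => simp [Matrix.charpoly, Matrix.det_isEmpty]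
  | succ m ih =>
    cases m with
    | zero =>
      rw [Matrix.charpoly, Matrix.det_fin_one, charmatrix_apply_eq]
      have : cmat 1 c 0 0 = -c 0 := rfl
      rw [this, map_neg, sub_neg_eq_add]
      simp [Fin.sum_univ_one]
    | succ k =>
      have hcomp : ∀ i j : Fin (k+1),
          cmat (k+1+1) c i.succ j.succ = cmat (k+1) (fun j => c j.succ) i j := by
        intro i j
        simp only [cmat, Matrix.of_apply, Fin.val_succ]
        split_ifs <;> first | rfl | omega
      have hsub : (charmatrix (cmat (k+1+1) c)).submatrix Fin.succ Fin.succ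
          = charmatrix (cmat (k+1) fun j => c j.succ) := by
        ext i j
        simp only [Matrix.submatrix_apply, charmatrix_apply, hcomp i j,
          Matrix.diagonal_apply, Fin.succ_inj]
      have hmin : (charmatrix (cmat (k+1+1) c)).submatrix Fin.castSucc Fin.succ
          = Matrix.of fun i j : Fin (k+1) =>
              if (i : ℕ) = (j : ℕ) + 1 then (X : R[X]) else if i = j then -1 else 0 := by
        ext i j
        have hi : (i : ℕ) < k + 1 := i.isLt
        have hj : (j : ℕ) < k + 1 := j.isLt
        simp only [Matrix.submatrix_apply, charmatrix_apply, Matrix.diagonal_apply,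
          Matrix.of_apply, cmat, Fin.val_succ, Fin.coe_castSucc, Fin.ext_iff]
        split_ifs <;> first | (exfalso; omega) | simp
      have htri : (Matrix.of fun i j : Fin (k+1) =>
            if (i : ℕ) = (j : ℕ) + 1 then (X : R[X]) else if i = j then -1 else 0).BlockTriangular
            OrderDual.toDual := by
        intro i j hij
        have hij' : i < j := hij
        simp only [Matrix.of_apply]
        rw [if_neg (by omega), if_neg (by exact ne_of_lt hij')]
      have hdet2 : (Matrix.of fun i j : Fin (k+1) =>
            if (i : ℕ) = (j : ℕ) + 1 then (X : R[X]) else if i = j then -1 else 0).det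
            = (-1) ^ (k+1) := by
        rw [Matrix.det_of_lowerTriangular _ htri]
        simp [Finset.prod_const]
      rw [Matrix.charpoly, Matrix.det_succ_column_zero, Fin.sum_univ_succ, Fin.sum_univ_castSucc]
      have hz : ∀ i : Fin k,
          (-1) ^ ((i.castSucc.succ : Fin (k+1+1)) : ℕ)
            * charmatrix (cmat (k+1+1) c) i.castSucc.succ 0
            * ((charmatrix (cmat (k+1+1) c)).submatrix i.castSucc.succ.succAbove Fin.succ).det
            = 0 := by
        intro i
        have hi : (i : ℕ) < k := i.isLt
        rw [charmatrix_apply_ne _ _ _ (Fin.succ_ne_zero _)]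
        have : cmat (k+1+1) c i.castSucc.succ 0 = 0 := by
          simp only [cmat, Matrix.of_apply, Fin.val_succ, Fin.coe_castSucc, Fin.val_zero]
          rw [if_neg (by omega)]; exact if_neg (by omega)
        rw [this]
        simp
      rw [Finset.sum_congr rfl fun i _ => hz i]
      have h00 : charmatrix (cmat (k+1+1) c) 0 0 = X := by
        rw [charmatrix_apply_eq]
        have : cmat (k+1+1) c 0 0 = 0 := by
          simp only [cmat, Matrix.of_apply, Fin.val_zero]
          exact (if_neg (by omega)).trans (if_neg (by omega))
        rw [this, map_zero, sub_zero]
      have hlast0 : charmatrix (cmat (k+1+1) c) ((Fin.last k).succ) 0 = C (c 0) := by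
        rw [charmatrix_apply_ne _ _ _ (Fin.succ_ne_zero _)]
        have : cmat (k+1+1) c (Fin.last k).succ 0 = -c 0 := by
          simp [cmat]
        rw [this, map_neg, neg_neg]
      rw [h00, hlast0]
      rw [show ((Fin.last k).succ : Fin (k+1+1)).succAbove = Fin.castSucc from by
        rw [Fin.succ_last, Fin.succAbove_last]]
      rw [hmin, hdet2, Fin.succAbove_zero, hsub, ← Matrix.charpoly, ih]
      have hpow : ((-1 : R[X]) ^ (((Fin.last k).succ : Fin (k+1+1)) : ℕ)) * C (c 0) * (-1)^(k+1)
          = C (c 0) := by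
        rw [Fin.val_succ, Fin.val_last, mul_right_comm, ← pow_add,
          Even.neg_one_pow ⟨k+1, by ring⟩, one_mul]
      rw [Finset.sum_const_zero, zero_add, hpow]
      rw [Fin.sum_univ_succ (f := fun j : Fin (k+1+1) => C (c j) * X ^ (j:ℕ))]
      simp only [Fin.val_zero, pow_zero, mul_one, one_mul, Fin.val_succ, pow_succ]
      rw [mul_add, Finset.mul_sum]
      have hs : ∀ j : Fin (k+1), X * (C (c j.succ) * X ^ (j:ℕ))
          = C (c j.succ) * (X ^ (j:ℕ) * X) := fun j => by ring
      rw [Finset.sum_congr rfl fun j _ => hs j]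
      ring

theorem charpoly_conj_eq {N : Type*} [Fintype N] [DecidableEq N]
    (P P' M : Matrix N N R) (h : P * P' = 1) :
    (P * M * P').charpoly = M.charpoly := by
  have hPc : P.map C * P'.map C = 1 := by
    rw [← Matrix.map_mul, h, Matrix.map_one _ (map_zero C) (map_one C)]
  have hc : charmatrix (P * M * P') = P.map C * charmatrix M * P'.map C := by
    unfold charmatrix
    rw [Matrix.mul_sub, Matrix.sub_mul]
    congr 1
    · rw [← (Matrix.scalar_commute (X : R[X]) (fun r => Commute.all _ _) (P.map C)).eq, mul_assoc,
        hPc, mul_one]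
    · simp only [RingHom.mapMatrix_apply, ← Matrix.map_mul]
  rw [Matrix.charpoly, Matrix.charpoly, hc, Matrix.det_mul, Matrix.det_mul]
  have : ((P.map C).det * (charmatrix M).det) * (P'.map C).det
      = (charmatrix M).det * ((P.map C) * (P'.map C)).det := by
    rw [Matrix.det_mul]; ring
  rw [this, hPc, Matrix.det_one, mul_one]

theorem charmatrix_blockDiagonal' {o N : Type*} [Fintype o] [DecidableEq o] [Fintype N]
    [DecidableEq N] (M : o → Matrix N N R) :
    charmatrix (blockDiagonal M) = blockDiagonal (fun k => charmatrix (M k)) := by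
  refine Matrix.ext fun x y => ?_
  obtain ⟨i, k⟩ := x
  obtain ⟨j, l⟩ := y
  rcases eq_or_ne k l with rfl | hkl
  · rcases eq_or_ne i j with rfl | hij
    · simp [blockDiagonal_apply]
    · rw [charmatrix_apply_ne _ _ _ (by simp [Prod.ext_iff, hij]), blockDiagonal_apply_eq,
        blockDiagonal_apply_eq, charmatrix_apply_ne _ _ _ hij]
  · rw [charmatrix_apply_ne _ _ _ (by simp [Prod.ext_iff, hkl]),
      blockDiagonal_apply_ne _ _ _ hkl, blockDiagonal_apply_ne _ _ _ hkl, map_zero, neg_zero]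

theorem charpoly_blockDiagonal' {o N : Type*} [Fintype o] [DecidableEq o] [Fintype N]
    [DecidableEq N] (M : o → Matrix N N R) :
    (blockDiagonal M).charpoly = ∏ k, (M k).charpoly := by
  rw [Matrix.charpoly, charmatrix_blockDiagonal', det_blockDiagonal]
  rfl

/-- The nilpotent shift part of `blockA`. -/
def shiftT (m : ℕ) : Matrix (Fin m) (Fin m) ℝ :=
  Matrix.of fun i j => if (j : ℕ) = (i : ℕ) + 1 then 1 else 0

/-- The last-row gain part of `blockA`. -/
def gainL (m : ℕ) (a : Fin m → ℝ) : Matrix (Fin m) (Fin m) ℝ :=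
  Matrix.of fun i j => if (i : ℕ) + 1 = m then -(a j) else 0

theorem blockA_eq (m n : ℕ) (a : Fin m → ℝ) (Q : Matrix (Fin n) (Fin n) ℝ) :
    blockA m n a Q
      = (shiftT m) ⊗ₖ (1 : Matrix (Fin n) (Fin n) ℝ) + (gainL m a) ⊗ₖ Q := by
  refine Matrix.ext fun x y => ?_
  obtain ⟨x1, x2⟩ := x
  obtain ⟨y1, y2⟩ := y
  have hy1 : (y1 : ℕ) < m := y1.isLt
  simp only [blockA, shiftT, gainL, Matrix.of_apply, Matrix.add_apply, kroneckerMap_apply,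
    Matrix.one_apply]
  by_cases h : (x1 : ℕ) + 1 = m
  · rw [if_pos h, if_pos h, if_neg (by omega)]
    ring
  · rw [if_neg h, if_neg h]
    by_cases h2 : (y1 : ℕ) = (x1 : ℕ) + 1
    · rw [if_pos h2]
      by_cases h3 : x2 = y2
      · rw [if_pos ⟨h2, h3⟩, if_pos h3]; ring
      · rw [if_neg (by tauto), if_neg h3]; ring
    · rw [if_neg h2, if_neg (by tauto)]
      ring

theorem blockA_diagonal (m n : ℕ) (a : Fin m → ℝ) (f : Fin n → ℝ) :
    blockA m n a (Matrix.diagonal f)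
      = Matrix.blockDiagonal (fun l : Fin n => cmat m (fun j => a j * f l)) := by
  refine Matrix.ext fun x y => ?_
  obtain ⟨x1, x2⟩ := x
  obtain ⟨y1, y2⟩ := y
  simp only [blockA, cmat, Matrix.of_apply, Matrix.blockDiagonal_apply, Matrix.diagonal_apply]
  by_cases hk : x2 = y2
  · subst hk
    by_cases h : (x1 : ℕ) + 1 = m <;> simp [h]
  · by_cases h : (x1 : ℕ) + 1 = m <;> simp [h, hk]

end BlockAProof

/-- The characteristic polynomial of the `m`-th order consensus block matrix
factors as `∏_{l=1}^n (x^m + a_m λ_l x^{m−1} + ⋯ + a_2 λ_l x + a_1 λ_l)`, where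
`λ_1, …, λ_n` are the eigenvalues (with multiplicity) of the real symmetric
matrix `Q`. -/
theorem blockA_charpoly (m n : ℕ) (hm : 1 ≤ m) (hn : 1 ≤ n)
    (Q : Matrix (Fin n) (Fin n) ℝ) (hQ : Q.IsHermitian) (a : Fin m → ℝ) :
    (blockA m n a Q).charpoly =
      ∏ l : Fin n, (X ^ m +
        ∑ j : Fin m, C (a j * hQ.eigenvalues l) * X ^ (j : ℕ)) := by
  classical
  open Matrix Kronecker BlockAProof in
  set U : Matrix (Fin n) (Fin n) ℝ := (hQ.eigenvectorUnitary : Matrix (Fin n) (Fin n) ℝ) with hU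
  have hU1 : U * star U = 1 := Matrix.mem_unitaryGroup_iff.mp hQ.eigenvectorUnitary.2
  have hQspec : Q = U * Matrix.diagonal hQ.eigenvalues * star U := by
    have h := hQ.spectral_theorem
    rw [show (RCLike.ofReal ∘ hQ.eigenvalues : Fin n → ℝ) = hQ.eigenvalues from by
      ext i; simp [RCLike.ofReal_real_eq_id]] at h
    exact h
  have hP : ((1 : Matrix (Fin m) (Fin m) ℝ) ⊗ₖ U) * ((1 : Matrix (Fin m) (Fin m) ℝ) ⊗ₖ star U)
      = 1 := by
    rw [← Matrix.mul_kronecker_mul, one_mul, hU1, Matrix.one_kronecker_one]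
  have key : blockA m n a Q
      = ((1 : Matrix (Fin m) (Fin m) ℝ) ⊗ₖ U)
        * blockA m n a (Matrix.diagonal hQ.eigenvalues)
        * ((1 : Matrix (Fin m) (Fin m) ℝ) ⊗ₖ star U) := by
    rw [blockA_eq m n a Q, blockA_eq m n a (Matrix.diagonal hQ.eigenvalues)]
    rw [Matrix.mul_add, Matrix.add_mul]
    rw [← Matrix.mul_kronecker_mul, ← Matrix.mul_kronecker_mul,
      ← Matrix.mul_kronecker_mul, ← Matrix.mul_kronecker_mul]
    rw [one_mul, one_mul, mul_one, mul_one, mul_one, hU1, ← hQspec]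
  rw [key, BlockAProof.charpoly_conj_eq _ _ _ hP, blockA_diagonal,
    BlockAProof.charpoly_blockDiagonal']
  exact Finset.prod_congr rfl fun l _ => cmat_charpoly m _
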